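/- Let n ≥ 1 and equip ℂ^{n+1} with its standard Hermitian inner product, and let ℓ ⊆ ℂ^{n+1} be a one-dimensional complex subspace. The map (L,P) ↦ L is a bijection from the set of flags (L,P) (L ⊆ P, dim L = 1, dim P = 2) with L^⊥ ∩ P = ℓ onto the set of one-dimensional complex subspaces of ℓ^⊥, with inverse L ↦ (L, ℓ ⊔ L). (The fibre of the twistor map τ over ℓ is identified with the projective space of the hyperplane ℓ^⊥.) -/
import Mathlib

section aux
variable {n : ℕ}
open Submodule

private lemma tw_key (ℓ m : Submodule ℂ (EuclideanSpace ℂ (Fin (n + 1))))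
    (hm : m ≤ ℓᗮ) : mᗮ ⊓ (ℓ ⊔ m) = ℓ := by
  have hlm : ℓ ≤ mᗮ := (Submodule.isOrtho_iff_le.mpr hm).symm
  apply le_antisymm
  · rintro x ⟨hx1, hx2⟩
    obtain ⟨a, ha, b, hb, rfl⟩ := Submodule.mem_sup.mp hx2
    have hbo : b ∈ mᗮ := by
      have : (a + b) - a ∈ mᗮ := Submodule.sub_mem _ hx1 (hlm ha)
      simpa using this
    have : b = 0 := by
      have := (Submodule.orthogonal_disjoint m).le_bot ⟨hb, hbo⟩
      simpa using this
    simpa [this] using ha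
  · exact le_inf hlm le_sup_left

private lemma tw_rank (ℓ m : Submodule ℂ (EuclideanSpace ℂ (Fin (n + 1))))
    (hℓ : Module.finrank ℂ ℓ = 1) (hm1 : Module.finrank ℂ m = 1)
    (hm : m ≤ ℓᗮ) : Module.finrank ℂ (ℓ ⊔ m : Submodule ℂ _) = 2 := by
  have hdisj : ℓ ⊓ m = ⊥ := by
    have := (Submodule.orthogonal_disjoint ℓ).mono_right hm
    exact this.eq_bot
  have := Submodule.finrank_sup_add_finrank_inf_eq ℓ m
  rw [hdisj] at this
  simp [hℓ, hm1, finrank_bot] at this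
  omega

private lemma tw_sup_eq (ℓ : Submodule ℂ (EuclideanSpace ℂ (Fin (n + 1))))
    (hℓ : Module.finrank ℂ ℓ = 1)
    (p : Submodule ℂ (EuclideanSpace ℂ (Fin (n + 1))) ×
        Submodule ℂ (EuclideanSpace ℂ (Fin (n + 1))))
    (hp : p.1 ≤ p.2 ∧ Module.finrank ℂ p.1 = 1 ∧ Module.finrank ℂ p.2 = 2 ∧
        p.1ᗮ ⊓ p.2 = ℓ) : ℓ ⊔ p.1 = p.2 := by
  obtain ⟨hle, h1, h2, hfib⟩ := hp
  have hℓP : ℓ ≤ p.2 := hfib ▸ inf_le_right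
  have hℓL : ℓ ≤ p.1ᗮ := hfib ▸ inf_le_left
  have hLl : p.1 ≤ ℓᗮ := (Submodule.isOrtho_iff_le.mpr hℓL).symm
  refine Submodule.eq_of_le_of_finrank_eq (sup_le hℓP hle) ?_
  rw [tw_rank ℓ p.1 hℓ h1 hLl, h2]

private lemma tw_mapsto (ℓ : Submodule ℂ (EuclideanSpace ℂ (Fin (n + 1))))
    (p : Submodule ℂ (EuclideanSpace ℂ (Fin (n + 1))) ×
        Submodule ℂ (EuclideanSpace ℂ (Fin (n + 1))))
    (hp : p.1 ≤ p.2 ∧ Module.finrank ℂ p.1 = 1 ∧ Module.finrank ℂ p.2 = 2 ∧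
        p.1ᗮ ⊓ p.2 = ℓ) : Module.finrank ℂ p.1 = 1 ∧ p.1 ≤ ℓᗮ := by
  obtain ⟨hle, h1, h2, hfib⟩ := hp
  have hℓL : ℓ ≤ p.1ᗮ := hfib ▸ inf_le_left
  exact ⟨h1, (Submodule.isOrtho_iff_le.mpr hℓL).symm⟩

end aux

/-- The fibre of the twistor map over a line `ℓ` is identified with the
projective space of the hyperplane `ℓ^⊥`: the map `(L,P) ↦ L` is a bijection
from the flags `(L,P)` with `L^⊥ ∩ P = ℓ` onto the lines in `ℓ^⊥`, with
inverse `L ↦ (L, ℓ ⊔ L)`. -/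
theorem twistor_fibre_is_projective_space (n : ℕ) (hn : 1 ≤ n)
    (ℓ : Submodule ℂ (EuclideanSpace ℂ (Fin (n + 1))))
    (hℓ : Module.finrank ℂ ℓ = 1) :
    Set.BijOn
      (fun p : Submodule ℂ (EuclideanSpace ℂ (Fin (n + 1))) ×
          Submodule ℂ (EuclideanSpace ℂ (Fin (n + 1))) => p.1)
      {p | p.1 ≤ p.2 ∧ Module.finrank ℂ p.1 = 1 ∧ Module.finrank ℂ p.2 = 2 ∧
        p.1ᗮ ⊓ p.2 = ℓ}
      {m | Module.finrank ℂ m = 1 ∧ m ≤ ℓᗮ} ∧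
    Set.InvOn
      (fun L : Submodule ℂ (EuclideanSpace ℂ (Fin (n + 1))) => (L, ℓ ⊔ L))
      (fun p : Submodule ℂ (EuclideanSpace ℂ (Fin (n + 1))) ×
          Submodule ℂ (EuclideanSpace ℂ (Fin (n + 1))) => p.1)
      {p | p.1 ≤ p.2 ∧ Module.finrank ℂ p.1 = 1 ∧ Module.finrank ℂ p.2 = 2 ∧
        p.1ᗮ ⊓ p.2 = ℓ}
      {m | Module.finrank ℂ m = 1 ∧ m ≤ ℓᗮ} := by
  have hsurj : ∀ m ∈ {m : Submodule ℂ (EuclideanSpace ℂ (Fin (n + 1))) |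
      Module.finrank ℂ m = 1 ∧ m ≤ ℓᗮ},
      (m, ℓ ⊔ m) ∈ {p : Submodule ℂ (EuclideanSpace ℂ (Fin (n + 1))) ×
          Submodule ℂ (EuclideanSpace ℂ (Fin (n + 1))) |
        p.1 ≤ p.2 ∧ Module.finrank ℂ p.1 = 1 ∧ Module.finrank ℂ p.2 = 2 ∧
        p.1ᗮ ⊓ p.2 = ℓ} := by
    rintro m ⟨hm1, hm2⟩
    exact ⟨le_sup_right, hm1, tw_rank ℓ m hℓ hm1 hm2, tw_key ℓ m hm2⟩
  have hleft : Set.LeftInvOn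
      (fun L : Submodule ℂ (EuclideanSpace ℂ (Fin (n + 1))) => (L, ℓ ⊔ L))
      (fun p : Submodule ℂ (EuclideanSpace ℂ (Fin (n + 1))) ×
          Submodule ℂ (EuclideanSpace ℂ (Fin (n + 1))) => p.1)
      {p | p.1 ≤ p.2 ∧ Module.finrank ℂ p.1 = 1 ∧ Module.finrank ℂ p.2 = 2 ∧
        p.1ᗮ ⊓ p.2 = ℓ} := by
    intro p hp
    have := tw_sup_eq ℓ hℓ p hp
    simp only [this]
  refine ⟨⟨fun p hp => tw_mapsto ℓ p hp, ?_, ?_⟩, hleft, fun m _ => rfl⟩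
  · intro p hp q hq h
    have h1 := hleft hp
    have h2 := hleft hq
    simp only at h1 h2 h
    rw [← h1, ← h2, h]
  · intro m hm
    exact ⟨(m, ℓ ⊔ m), hsurj m hm, rfl⟩
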